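/- Let (C_1, …, C_γ) be a Grundy coloring of a graph G and suppose |C_x| = 1 for some index x. Then the reordered sequence (C_1, …, C_{x−1}, C_{x+1}, …, C_γ, C_x), obtained by moving the singleton class C_x to the end, is also a Grundy coloring of G. -/

import Mathlib

variable {V : Type*} [Fintype V] [DecidableEq V]

/-- A Grundy coloring of the vertex set `X` of `G`: an ordered partition of `X`
into nonempty independent sets such that every vertex of the `i`-th class has a
neighbor in every earlier class. -/
def GrundyColoringOn (G : SimpleGraph V) (X : Finset V) (C : List (Finset V)) : Prop :=
  (∀ A ∈ C, A.Nonempty) ∧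
  C.Pairwise Disjoint ∧
  (∀ v, v ∈ X ↔ ∃ A ∈ C, v ∈ A) ∧
  (∀ A ∈ C, ∀ u ∈ A, ∀ w ∈ A, ¬ G.Adj u w) ∧
  (∀ i j : ℕ, ∀ hi : i < C.length, ∀ hj : j < C.length, j < i →
     ∀ v ∈ C.get ⟨i, hi⟩, ∃ u ∈ C.get ⟨j, hj⟩, G.Adj u v)

/-- The set of lengths of Grundy colorings of `X` in `G`; its greatest element
is the Grundy number of the induced subgraph `G[X]`. -/
def grundySet (G : SimpleGraph V) (X : Finset V) : Set ℕ :=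
  {n | ∃ C : List (Finset V), GrundyColoringOn G X C ∧ C.length = n}

/-- Moving a singleton color class to the end of a Grundy coloring yields a Grundy coloring. -/
theorem stmt4 (G : SimpleGraph V) (C : List (Finset V))
    (hC : GrundyColoringOn G Finset.univ C)
    (x : ℕ) (hx : x < C.length) (hcard : (C.get ⟨x, hx⟩).card = 1) :
    GrundyColoringOn G Finset.univ (C.eraseIdx x ++ [C.get ⟨x, hx⟩]) := by
  obtain ⟨hne, hdisj, hcov, hind, hgr⟩ := hC
  have hm : (C.eraseIdx x).length + 1 = C.length := List.length_eraseIdx_add_one hx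
  set m := (C.eraseIdx x).length with hmdef
  have hperm : C.Perm (C.eraseIdx x ++ [C.get ⟨x, hx⟩]) := by
    have h1 : C.Perm (C.get ⟨x, hx⟩ :: C.eraseIdx x) := by
      conv_lhs => rw [← List.take_append_drop x C]
      rw [List.eraseIdx_eq_take_drop_succ]
      rw [List.get_eq_getElem, ← List.getElem_cons_drop hx]
      exact List.perm_middle
    exact h1.trans (List.perm_append_singleton _ _).symm
  have hmem : ∀ A, A ∈ C.eraseIdx x ++ [C.get ⟨x, hx⟩] ↔ A ∈ C := fun A => hperm.mem_iff.symm
  refine ⟨fun A hA => hne A ((hmem A).1 hA),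
    (hperm.pairwise_iff (fun h => h.symm)).1 hdisj,
    fun v => by
      rw [hcov v]
      constructor
      · rintro ⟨A, hA, hvA⟩; exact ⟨A, (hmem A).2 hA, hvA⟩
      · rintro ⟨A, hA, hvA⟩; exact ⟨A, (hmem A).1 hA, hvA⟩,
    fun A hA => hind A ((hmem A).1 hA), ?_⟩
  intro i j hi hj hji v hv
  simp only [List.get_eq_getElem] at *
  simp only [List.length_append, List.length_singleton] at hi hj
  have hxm : x < C.length := hx
  -- describe elements of the new list
  have hget : ∀ k (hk : k < m + 1), ∃ k', ∃ hk' : k' < C.length,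
      (C.eraseIdx x ++ [C[x]])[k]'(by simp; omega) = C[k'] ∧
      ((k < m ∧ k < x ∧ k' = k) ∨ (k < m ∧ x ≤ k ∧ k' = k + 1) ∨ (k = m ∧ k' = x)) := by
    intro k hk
    rcases lt_or_ge k m with h | h
    · have e : (C.eraseIdx x ++ [C[x]])[k]'(by simp; omega) = (C.eraseIdx x)[k] :=
        List.getElem_append_left h
      rw [List.getElem_eraseIdx] at e
      by_cases hkx : k < x
      · rw [dif_pos hkx] at e
        exact ⟨k, by omega, e, Or.inl ⟨h, hkx, rfl⟩⟩
      · rw [dif_neg hkx] at e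
        exact ⟨k + 1, by omega, e, Or.inr (Or.inl ⟨h, by omega, rfl⟩)⟩
    · have hkm : k = m := by omega
      refine ⟨x, hx, ?_, Or.inr (Or.inr ⟨hkm, rfl⟩)⟩
      rw [List.getElem_append_right (by omega : (C.eraseIdx x).length ≤ k)]
      have : k - (C.eraseIdx x).length = 0 := by omega
      simp [this]
  obtain ⟨i', hi', hgi, hci⟩ := hget i (by omega)
  obtain ⟨j', hj', hgj, hcj⟩ := hget j (by omega)
  rw [hgi] at hv
  rw [hgj]
  -- the singleton class
  have hsing : ∀ u ∈ C[x], ∀ w ∈ C[x], u = w := by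
    intro u hu w hw
    obtain ⟨z, hz⟩ := Finset.card_eq_one.1 hcard
    rw [hz] at hu hw
    simp only [Finset.mem_singleton] at hu hw
    rw [hu, hw]
  rcases hci with ⟨him, hix, hii⟩ | ⟨him, hix, hii⟩ | ⟨him, hii⟩
  · -- i < m, i < x : j' < i
    subst hii
    have hj'lt : j' < i' := by omega
    exact hgr i' j' hi' hj' hj'lt v hv
  · -- i' = i + 1, with x ≤ i < m
    subst hii
    have hj'lt : j' < i + 1 ∧ j' ≠ x := by omega
    rcases lt_or_gt_of_ne hj'lt.2 with h | h
    · exact hgr (i+1) j' hi' hj' (by omega) v hv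
    · exact hgr (i+1) j' hi' hj' (by omega) v hv
  · -- i = m : v is the singleton vertex, v ∈ C[x]
    simp only [hii] at hv
    have hj'x : j' ≠ x := by omega
    rcases lt_or_gt_of_ne hj'x with h | h
    · exact hgr x j' hx hj' h v hv
    · -- j' > x : every w ∈ C[j'] has a neighbor in C[x] = {v}
      obtain ⟨w, hw⟩ := hne C[j'] (List.getElem_mem hj')
      obtain ⟨u, hu, hadj⟩ := hgr j' x hj' hx h w hw
      have : u = v := hsing u hu v hv
      exact ⟨w, hw, ((this ▸ hadj).symm)⟩
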